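/- Suppose Φ : L(H) → L(K) satisfies Φ(X†) = Φ(X)† for all X, and X achieves ‖(Φ ⊗ I)(X)‖_tr = ‖Φ ⊗ I‖_tr with ‖X‖_tr = 1. Define the Hermitian matrix Y = (1/2) X ⊗ |0⟩⟨1| + (1/2) X† ⊗ |1⟩⟨0| on an enlarged space with one extra qubit. Then ‖Y‖_tr = 1 and ‖(Φ ⊗ I')(Y)‖_tr = ‖(Φ ⊗ I)(X)‖_tr, where I' is the identity on the enlarged auxiliary space. -/

import Mathlib

open scoped ComplexOrder Matrix

/-- Matrix square root: the positive semidefinite square root of a PSD matrix,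
with junk value 0 for non-PSD matrices. -/
noncomputable def sqrtM {i : Type} [Fintype i] [DecidableEq i] (A : Matrix i i Complex) :
    Matrix i i Complex :=
  letI := Classical.propDecidable A.PosSemidef
  if h : A.PosSemidef then
    (h.1.eigenvectorUnitary : Matrix i i Complex) *
      Matrix.diagonal ((↑) ∘ Real.sqrt ∘ h.1.eigenvalues) *
      (star h.1.eigenvectorUnitary : Matrix i i Complex)
  else 0

/-- Trace norm: trace of the square root of X-dagger-X (sum of singular values). -/
noncomputable def traceNorm {i : Type} [Fintype i] [DecidableEq i] (X : Matrix i i Complex) : Real :=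
  ((sqrtM (Xᴴ * X)).trace).re

/-- Fidelity F(rho, xi) = trace of the square root of (sqrt rho * xi * sqrt rho). -/
noncomputable def fidelity {i : Type} [Fintype i] [DecidableEq i] (ρ ξ : Matrix i i Complex) : Real :=
  ((sqrtM (sqrtM ρ * ξ * sqrtM ρ)).trace).re

/-- Outer product of vectors. -/
noncomputable def outer {i : Type} (ψ φ : i → Complex) : Matrix i i Complex :=
  Matrix.of fun p q => ψ p * star (φ q)

/-- Partial trace over the first tensor factor. -/
noncomputable def ptraceFst {α β : Type} [Fintype α] (X : Matrix (α × β) (α × β) Complex) :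
    Matrix β β Complex :=
  Matrix.of fun i j => ∑ a : α, X (a, i) (a, j)

/-- Partial trace over the second tensor factor. -/
noncomputable def ptraceSnd {α β : Type} [Fintype β] (X : Matrix (α × β) (α × β) Complex) :
    Matrix α α Complex :=
  Matrix.of fun i j => ∑ b : β, X (i, b) (j, b)

/-- The extension of a map on matrices by the identity on an auxiliary space. -/
noncomputable def extendId {i k : Type} (f : Matrix i i Complex → Matrix k k Complex)
    (α : Type) (X : Matrix (i × α) (i × α) Complex) : Matrix (k × α) (k × α) Complex :=
  Matrix.of fun p q => f (Matrix.of fun a b => X (a, p.2) (b, q.2)) p.1 q.1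

/-- Complete positivity: all extensions by an identity map PSD matrices to PSD matrices. -/
def IsCompletelyPositive {i k : Type} [Fintype i] [DecidableEq i] [Fintype k] [DecidableEq k]
    (f : Matrix i i Complex → Matrix k k Complex) : Prop :=
  ∀ (r : ℕ) (X : Matrix (i × Fin r) (i × Fin r) Complex), X.PosSemidef →
    (extendId f (Fin r) X).PosSemidef

/-- Trace preservation. -/
def IsTracePreserving {i k : Type} [Fintype i] [Fintype k]
    (f : Matrix i i Complex → Matrix k k Complex) : Prop :=
  ∀ X : Matrix i i Complex, (f X).trace = X.trace

/-- The diamond norm: the supremum of the trace norms of (f tensor I)(X) over all X of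
trace norm one, with the identity on an auxiliary space of the same dimension as the input. -/
noncomputable def dnorm {i k : Type} [Fintype i] [DecidableEq i] [Fintype k] [DecidableEq k]
    (f : Matrix i i Complex → Matrix k k Complex) : Real :=
  sSup {t : Real | ∃ X : Matrix (i × i) (i × i) Complex,
    traceNorm X = 1 ∧ t = traceNorm (extendId f i X)}

namespace HermAux

open Matrix

variable {ι : Type} [Fintype ι] [DecidableEq ι]

/-- The PSD square root (replacement for the removed `Matrix.PosSemidef.sqrt`). -/
noncomputable def _root_.Matrix.PosSemidef.sqrt {A : Matrix ι ι ℂ} (h : A.PosSemidef) :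
    Matrix ι ι ℂ :=
  (h.1.eigenvectorUnitary : Matrix ι ι Complex) *
    Matrix.diagonal ((↑) ∘ Real.sqrt ∘ h.1.eigenvalues) *
    (star h.1.eigenvectorUnitary : Matrix ι ι Complex)

lemma sqrtM_eq {A : Matrix ι ι ℂ} (hA : A.PosSemidef) : sqrtM A = hA.sqrt := by
  rw [sqrtM]; exact dif_pos hA

/-- Functional calculus for a Hermitian matrix. -/
noncomputable def fc {A : Matrix ι ι ℂ} (hA : A.IsHermitian) (f : ℝ → ℝ) : Matrix ι ι ℂ :=
  (hA.eigenvectorUnitary : Matrix ι ι ℂ) *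
    Matrix.diagonal (Complex.ofReal ∘ f ∘ hA.eigenvalues) *
    (star hA.eigenvectorUnitary : Matrix ι ι ℂ)

variable {A : Matrix ι ι ℂ} (hA : A.IsHermitian) (f g : ℝ → ℝ)

lemma star_mul_self_eigU :
    (star hA.eigenvectorUnitary : Matrix ι ι ℂ) * (hA.eigenvectorUnitary : Matrix ι ι ℂ) = 1 :=
  Matrix.mem_unitaryGroup_iff'.mp hA.eigenvectorUnitary.2

lemma fc_mul : fc hA f * fc hA g = fc hA (fun t => f t * g t) := by
  unfold fc
  have h1 := star_mul_self_eigU hA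
  calc (hA.eigenvectorUnitary : Matrix ι ι ℂ) *
        Matrix.diagonal (Complex.ofReal ∘ f ∘ hA.eigenvalues) *
        (star hA.eigenvectorUnitary : Matrix ι ι ℂ) *
        ((hA.eigenvectorUnitary : Matrix ι ι ℂ) *
          Matrix.diagonal (Complex.ofReal ∘ g ∘ hA.eigenvalues) *
          (star hA.eigenvectorUnitary : Matrix ι ι ℂ))
      = (hA.eigenvectorUnitary : Matrix ι ι ℂ) *
        (Matrix.diagonal (Complex.ofReal ∘ f ∘ hA.eigenvalues) *
          (((star hA.eigenvectorUnitary : Matrix ι ι ℂ) *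
            (hA.eigenvectorUnitary : Matrix ι ι ℂ)) *
            Matrix.diagonal (Complex.ofReal ∘ g ∘ hA.eigenvalues))) *
        (star hA.eigenvectorUnitary : Matrix ι ι ℂ) := by
        simp only [Matrix.mul_assoc]
    _ = _ := by
        rw [h1, Matrix.one_mul, Matrix.diagonal_mul_diagonal]
        have h2 : (fun i => (Complex.ofReal ∘ f ∘ hA.eigenvalues) i *
            (Complex.ofReal ∘ g ∘ hA.eigenvalues) i) =
            Complex.ofReal ∘ (fun t => f t * g t) ∘ hA.eigenvalues := by
          funext i
          exact (Complex.ofReal_mul _ _).symm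
        rw [h2]

lemma fc_conjTranspose : (fc hA f)ᴴ = fc hA f := by
  have hd : (Matrix.diagonal (Complex.ofReal ∘ f ∘ hA.eigenvalues))ᴴ =
      Matrix.diagonal (Complex.ofReal ∘ f ∘ hA.eigenvalues) := by
    rw [Matrix.diagonal_conjTranspose]
    have h2 : star (Complex.ofReal ∘ f ∘ hA.eigenvalues) =
        Complex.ofReal ∘ f ∘ hA.eigenvalues := by
      funext i
      simp [Complex.conj_ofReal]
    rw [h2]
  unfold fc
  simp only [Matrix.star_eq_conjTranspose]
  rw [Matrix.conjTranspose_mul, Matrix.conjTranspose_mul, hd,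
    Matrix.conjTranspose_conjTranspose, Matrix.mul_assoc]

lemma fc_trace : (fc hA f).trace = ∑ i, (f (hA.eigenvalues i) : ℂ) := by
  unfold fc
  rw [Matrix.trace_mul_cycle, star_mul_self_eigU hA, Matrix.one_mul, Matrix.trace_diagonal]
  simp

lemma fc_id : fc hA (fun t => t) = A := by
  conv_rhs => rw [hA.spectral_theorem]
  rfl

lemma fc_one : fc hA (fun _ => 1) = 1 := by
  unfold fc
  have h : Matrix.diagonal (Complex.ofReal ∘ (fun _ : ℝ => (1:ℝ)) ∘ hA.eigenvalues) =
      (1 : Matrix ι ι ℂ) := by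
    have h2 : Complex.ofReal ∘ (fun _ : ℝ => (1:ℝ)) ∘ hA.eigenvalues =
        fun _ => (1 : ℂ) := by
      funext i; simp
    rw [h2, Matrix.diagonal_one]
  rw [h, Matrix.mul_one]
  exact Matrix.mem_unitaryGroup_iff.mp hA.eigenvectorUnitary.2

lemma fc_congr (h : ∀ i, f (hA.eigenvalues i) = g (hA.eigenvalues i)) : fc hA f = fc hA g := by
  unfold fc
  have h2 : Complex.ofReal ∘ f ∘ hA.eigenvalues = Complex.ofReal ∘ g ∘ hA.eigenvalues := by
    funext i
    simp only [Function.comp_apply, h i]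
  rw [h2]

lemma fc_zero : fc hA (fun _ => 0) = 0 := by
  unfold fc
  have h : Matrix.diagonal (Complex.ofReal ∘ (fun _ : ℝ => (0:ℝ)) ∘ hA.eigenvalues) =
      (0 : Matrix ι ι ℂ) := by
    have h2 : Complex.ofReal ∘ (fun _ : ℝ => (0:ℝ)) ∘ hA.eigenvalues =
        fun _ => (0 : ℂ) := by
      funext i; simp
    rw [h2, Matrix.diagonal_zero]
  rw [h, Matrix.mul_zero, Matrix.zero_mul]

lemma fc_sub : fc hA f - fc hA g = fc hA (fun t => f t - g t) := by
  unfold fc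
  rw [← Matrix.sub_mul, ← Matrix.mul_sub, Matrix.diagonal_sub]
  have h2 : (fun i => (Complex.ofReal ∘ f ∘ hA.eigenvalues) i -
      (Complex.ofReal ∘ g ∘ hA.eigenvalues) i) =
      Complex.ofReal ∘ (fun t => f t - g t) ∘ hA.eigenvalues := by
    funext i
    exact (Complex.ofReal_sub _ _).symm
  rw [h2]

lemma sqrt_eq_fc {A : Matrix ι ι ℂ} (hA : A.PosSemidef) : hA.sqrt = fc hA.1 Real.sqrt := rfl

lemma _root_.Matrix.PosSemidef.sqrt_mul_self {A : Matrix ι ι ℂ} (hA : A.PosSemidef) :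
    hA.sqrt * hA.sqrt = A := by
  rw [sqrt_eq_fc, fc_mul]
  conv_rhs => rw [← fc_id hA.1]
  exact fc_congr _ _ _ fun i => Real.mul_self_sqrt (hA.eigenvalues_nonneg i)

lemma _root_.Matrix.PosSemidef.posSemidef_sqrt {A : Matrix ι ι ℂ} (hA : A.PosSemidef) :
    hA.sqrt.PosSemidef := by
  have h : hA.sqrt = fc hA.1 (fun t => Real.sqrt (Real.sqrt t)) *
      (fc hA.1 (fun t => Real.sqrt (Real.sqrt t)))ᴴ := by
    rw [fc_conjTranspose, fc_mul, sqrt_eq_fc]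
    exact fc_congr _ _ _ fun i => (Real.mul_self_sqrt (Real.sqrt_nonneg _)).symm
  rw [h]
  exact Matrix.posSemidef_self_mul_conjTranspose _

lemma _root_.Matrix.PosSemidef.eq_sqrt_of_sq_eq {A B : Matrix ι ι ℂ} (hB : B.PosSemidef)
    (hA : A.PosSemidef) (h : B ^ 2 = A) : B = hA.sqrt := by
  open scoped MatrixOrder in
  have hs : hA.sqrt ^ 2 = A := by rw [pow_two]; exact hA.sqrt_mul_self
  open scoped MatrixOrder in
  rw [← CFC.sqrt_sq B hB.nonneg, ← CFC.sqrt_sq hA.sqrt hA.posSemidef_sqrt.nonneg, h, hs]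

/-- Trace norm is invariant under conjugate transpose. -/
lemma traceNorm_conjTranspose (X : Matrix ι ι ℂ) : traceNorm Xᴴ = traceNorm X := by
  have hA : (Xᴴ * X).PosSemidef := Matrix.posSemidef_conjTranspose_mul_self X
  have hB : (X * Xᴴ).PosSemidef := Matrix.posSemidef_self_mul_conjTranspose X
  have hH : (Xᴴ * X).IsHermitian := hA.1
  have g : ℝ → ℝ := fun t => (Real.sqrt t)⁻¹
  have hXAX : Xᴴ * X = fc hH (fun t => t) := (fc_id hH).symm
  -- M is PSD
  have hMpsd : (X * fc hH (fun t => (Real.sqrt t)⁻¹) * Xᴴ).PosSemidef := by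
    have hhh : fc hH (fun t => Real.sqrt ((Real.sqrt t)⁻¹)) *
        fc hH (fun t => Real.sqrt ((Real.sqrt t)⁻¹)) = fc hH (fun t => (Real.sqrt t)⁻¹) := by
      rw [fc_mul]
      exact fc_congr hH _ _ fun i => Real.mul_self_sqrt (inv_nonneg.2 (Real.sqrt_nonneg _))
    have h2 : X * fc hH (fun t => (Real.sqrt t)⁻¹) * Xᴴ =
        (X * fc hH (fun t => Real.sqrt ((Real.sqrt t)⁻¹))) *
        (X * fc hH (fun t => Real.sqrt ((Real.sqrt t)⁻¹)))ᴴ := by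
      rw [Matrix.conjTranspose_mul, fc_conjTranspose, ← hhh]
      simp only [Matrix.mul_assoc]
    rw [h2]
    exact Matrix.posSemidef_self_mul_conjTranspose _
  -- square-root inverse trick on eigenvalues
  have hgval : ∀ t : ℝ, 0 ≤ t → t * (Real.sqrt t)⁻¹ = Real.sqrt t := by
    intro t ht
    rcases eq_or_lt_of_le ht with h | h
    · rw [← h]; simp
    · have hs : Real.sqrt t ≠ 0 := ne_of_gt (Real.sqrt_pos.2 h)
      field_simp
      rw [Real.sq_sqrt ht]
  have hgval1 : ∀ t : ℝ, 0 < t → (Real.sqrt t)⁻¹ * t * (Real.sqrt t)⁻¹ = 1 := by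
    intro t ht
    have hs : Real.sqrt t ≠ 0 := ne_of_gt (Real.sqrt_pos.2 ht)
    have := hgval t ht.le
    rw [mul_comm ((Real.sqrt t)⁻¹) t, this]
    exact mul_inv_cancel₀ hs
  -- the kernel trick
  have hk0 : X * fc hH (fun t => 1 - (Real.sqrt t)⁻¹ * t * (Real.sqrt t)⁻¹) = 0 := by
    have hkval : ∀ i, (1 - (Real.sqrt (hH.eigenvalues i))⁻¹ * hH.eigenvalues i *
        (Real.sqrt (hH.eigenvalues i))⁻¹) * hH.eigenvalues i *
        (1 - (Real.sqrt (hH.eigenvalues i))⁻¹ * hH.eigenvalues i *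
        (Real.sqrt (hH.eigenvalues i))⁻¹) = 0 := by
      intro i
      rcases eq_or_lt_of_le (hA.eigenvalues_nonneg i) with h | h
      · rw [← h]; ring
      · rw [hgval1 _ h]; ring
    have hherm : (X * fc hH (fun t => 1 - (Real.sqrt t)⁻¹ * t * (Real.sqrt t)⁻¹))ᴴ *
        (X * fc hH (fun t => 1 - (Real.sqrt t)⁻¹ * t * (Real.sqrt t)⁻¹)) = 0 := by
      rw [Matrix.conjTranspose_mul, fc_conjTranspose]
      have e1 : fc hH (fun t => 1 - (Real.sqrt t)⁻¹ * t * (Real.sqrt t)⁻¹) * Xᴴ *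
          (X * fc hH (fun t => 1 - (Real.sqrt t)⁻¹ * t * (Real.sqrt t)⁻¹)) =
          fc hH (fun t => 1 - (Real.sqrt t)⁻¹ * t * (Real.sqrt t)⁻¹) * (Xᴴ * X) *
          fc hH (fun t => 1 - (Real.sqrt t)⁻¹ * t * (Real.sqrt t)⁻¹) := by
        simp only [Matrix.mul_assoc]
      rw [e1, congrArg (fun Z => fc hH (fun t => 1 - (Real.sqrt t)⁻¹ * t * (Real.sqrt t)⁻¹) * Z *
        fc hH (fun t => 1 - (Real.sqrt t)⁻¹ * t * (Real.sqrt t)⁻¹)) hXAX, fc_mul, fc_mul,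
        ← fc_zero hH]
      exact fc_congr hH _ _ fun i => hkval i
    exact Matrix.conjTranspose_mul_self_eq_zero.mp hherm
  -- M squared is X * Xᴴ
  have hM2 : (X * fc hH (fun t => (Real.sqrt t)⁻¹) * Xᴴ) ^ 2 = X * Xᴴ := by
    have h1 : (X * fc hH (fun t => (Real.sqrt t)⁻¹) * Xᴴ) ^ 2 =
        X * (fc hH (fun t => (Real.sqrt t)⁻¹) * (Xᴴ * X) * fc hH (fun t => (Real.sqrt t)⁻¹)) * Xᴴ := by
      rw [pow_two]
      simp only [Matrix.mul_assoc]
    rw [h1, congrArg (fun Z => fc hH (fun t => (Real.sqrt t)⁻¹) * Z *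
      fc hH (fun t => (Real.sqrt t)⁻¹)) hXAX, fc_mul, fc_mul]
    have hsplit : fc hH (fun t => (Real.sqrt t)⁻¹ * t * (Real.sqrt t)⁻¹) =
        1 - fc hH (fun t => 1 - (Real.sqrt t)⁻¹ * t * (Real.sqrt t)⁻¹) := by
      rw [← fc_one hH, fc_sub]
      exact fc_congr hH _ _ fun i => by ring
    rw [hsplit, Matrix.mul_sub, Matrix.mul_one, Matrix.sub_mul, hk0, Matrix.zero_mul, sub_zero]
  have hMsqrt : X * fc hH (fun t => (Real.sqrt t)⁻¹) * Xᴴ = hB.sqrt :=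
    hMpsd.eq_sqrt_of_sq_eq hB hM2
  -- traces
  have htr : hB.sqrt.trace = hA.sqrt.trace := by
    rw [← hMsqrt, Matrix.trace_mul_cycle,
      congrArg (fun Z => Matrix.trace (Z * fc hH (fun t => (Real.sqrt t)⁻¹))) hXAX,
      fc_mul, sqrt_eq_fc hA, fc_trace, fc_trace]
    refine Finset.sum_congr rfl fun i _ => ?_
    rw [hgval _ (hA.eigenvalues_nonneg i)]
  have e1 : Xᴴᴴ * Xᴴ = X * Xᴴ := by rw [Matrix.conjTranspose_conjTranspose]
  rw [traceNorm, traceNorm, e1, sqrtM_eq hB, sqrtM_eq hA, htr]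


lemma trace_submatrix_equiv {κ : Type} [Fintype κ] (e : κ ≃ ι) (A : Matrix ι ι ℂ) :
    (A.submatrix e e).trace = A.trace :=
  Fintype.sum_equiv e _ _ fun _ => rfl

/-- Trace norm is invariant under simultaneous reindexing. -/
lemma traceNorm_submatrix {κ : Type} [Fintype κ] [DecidableEq κ] (e : κ ≃ ι) (A : Matrix ι ι ℂ) :
    traceNorm (A.submatrix e e) = traceNorm A := by
  have hA := Matrix.posSemidef_conjTranspose_mul_self A
  have hmul : (A.submatrix e e)ᴴ * (A.submatrix e e) = (Aᴴ * A).submatrix e e := by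
    rw [Matrix.conjTranspose_submatrix, Matrix.submatrix_mul_equiv]
  have hA' : ((Aᴴ * A).submatrix e e).PosSemidef := hA.submatrix e
  have hs : (hA.sqrt.submatrix e e).PosSemidef := hA.posSemidef_sqrt.submatrix e
  have hsq : (hA.sqrt.submatrix e e) ^ 2 = (Aᴴ * A).submatrix e e := by
    rw [pow_two, Matrix.submatrix_mul_equiv, Matrix.PosSemidef.sqrt_mul_self]
  have heq : hA.sqrt.submatrix e e = hA'.sqrt := hs.eq_sqrt_of_sq_eq hA' hsq
  rw [traceNorm, traceNorm, hmul, sqrtM_eq hA', sqrtM_eq hA, ← heq, trace_submatrix_equiv]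

open Kronecker

/-- The Hermitian doubling pattern. -/
noncomputable def pat {ι : Type} (W : Matrix ι ι ℂ) : Matrix (ι × Fin 2) (ι × Fin 2) ℂ :=
  Matrix.of fun p q =>
    if p.2 = 0 ∧ q.2 = 1 then (1/2 : ℂ) * W p.1 q.1
    else if p.2 = 1 ∧ q.2 = 0 then (1/2 : ℂ) * star (W q.1 p.1) else 0

lemma kron_conjTranspose {κ : Type} (A : Matrix ι ι ℂ) (B : Matrix κ κ ℂ) :
    (A ⊗ₖ B)ᴴ = Aᴴ ⊗ₖ Bᴴ := by
  ext ⟨i, j⟩ ⟨k, l⟩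
  simp [Matrix.conjTranspose_apply, star_mul']

lemma pat_eq (W : Matrix ι ι ℂ) :
    pat W = (1/2 : ℂ) • (W ⊗ₖ !![0,1;0,0] + Wᴴ ⊗ₖ !![0,0;1,0]) := by
  ext ⟨i, x⟩ ⟨j, y⟩
  fin_cases x <;> fin_cases y <;>
    simp [pat, Matrix.conjTranspose_apply, mul_comm]

lemma posSemidef_ofReal_smul {c : ℝ} (hc : 0 ≤ c) {A : Matrix ι ι ℂ} (hA : A.PosSemidef) :
    ((c : ℂ) • A).PosSemidef := by
  constructor
  · show ((c : ℂ) • A)ᴴ = (c : ℂ) • A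
    rw [Matrix.conjTranspose_smul, hA.1.eq, Complex.star_def, Complex.conj_ofReal]
  · exact (hA.smul (a := (c : ℂ)) (Complex.zero_le_real.2 hc)).2

lemma posSemidef_kron_diagproj {A : Matrix ι ι ℂ} (hA : A.PosSemidef)
    (E : Matrix (Fin 2) (Fin 2) ℂ) (hE : Eᴴ = E) (hEE : E * E = E) :
    (A ⊗ₖ E).PosSemidef := by
  have h : (hA.sqrt ⊗ₖ E) * (hA.sqrt ⊗ₖ E)ᴴ = A ⊗ₖ E := by
    rw [kron_conjTranspose, hA.posSemidef_sqrt.1.eq, hE, ← Matrix.mul_kronecker_mul,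
      Matrix.PosSemidef.sqrt_mul_self, hEE]
  rw [← h]
  exact Matrix.posSemidef_self_mul_conjTranspose _

lemma traceNorm_pat (W : Matrix ι ι ℂ) : traceNorm (pat W) = traceNorm W := by
  have hBW : (W * Wᴴ).PosSemidef := Matrix.posSemidef_self_mul_conjTranspose W
  have hAW : (Wᴴ * W).PosSemidef := Matrix.posSemidef_conjTranspose_mul_self W
  have e0011 : (!![0,1;0,0] : Matrix (Fin 2) (Fin 2) ℂ) * !![0,0;1,0] = !![1,0;0,0] := by
    ext i j; fin_cases i <;> fin_cases j <;> simp [Matrix.mul_apply, Fin.sum_univ_two]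
  have e1100 : (!![0,0;1,0] : Matrix (Fin 2) (Fin 2) ℂ) * !![0,1;0,0] = !![0,0;0,1] := by
    ext i j; fin_cases i <;> fin_cases j <;> simp [Matrix.mul_apply, Fin.sum_univ_two]
  have e0101 : (!![0,1;0,0] : Matrix (Fin 2) (Fin 2) ℂ) * !![0,1;0,0] = 0 := by
    ext i j; fin_cases i <;> fin_cases j <;> simp [Matrix.mul_apply, Fin.sum_univ_two]
  have e1010 : (!![0,0;1,0] : Matrix (Fin 2) (Fin 2) ℂ) * !![0,0;1,0] = 0 := by
    ext i j; fin_cases i <;> fin_cases j <;> simp [Matrix.mul_apply, Fin.sum_univ_two]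
  have e0000 : (!![1,0;0,0] : Matrix (Fin 2) (Fin 2) ℂ) * !![1,0;0,0] = !![1,0;0,0] := by
    ext i j; fin_cases i <;> fin_cases j <;> simp [Matrix.mul_apply, Fin.sum_univ_two]
  have e1111 : (!![0,0;0,1] : Matrix (Fin 2) (Fin 2) ℂ) * !![0,0;0,1] = !![0,0;0,1] := by
    ext i j; fin_cases i <;> fin_cases j <;> simp [Matrix.mul_apply, Fin.sum_univ_two]
  have e0011b : (!![1,0;0,0] : Matrix (Fin 2) (Fin 2) ℂ) * !![0,0;0,1] = 0 := by
    ext i j; fin_cases i <;> fin_cases j <;> simp [Matrix.mul_apply, Fin.sum_univ_two]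
  have e1100b : (!![0,0;0,1] : Matrix (Fin 2) (Fin 2) ℂ) * !![1,0;0,0] = 0 := by
    ext i j; fin_cases i <;> fin_cases j <;> simp [Matrix.mul_apply, Fin.sum_univ_two]
  have h00H : (!![1,0;0,0] : Matrix (Fin 2) (Fin 2) ℂ)ᴴ = !![1,0;0,0] := by
    ext i j; fin_cases i <;> fin_cases j <;> simp [Matrix.conjTranspose_apply]
  have h11H : (!![0,0;0,1] : Matrix (Fin 2) (Fin 2) ℂ)ᴴ = !![0,0;0,1] := by
    ext i j; fin_cases i <;> fin_cases j <;> simp [Matrix.conjTranspose_apply]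
  -- pat W is Hermitian
  have hpatH : (pat W)ᴴ = pat W := by
    rw [pat_eq, Matrix.conjTranspose_smul, Matrix.conjTranspose_add, kron_conjTranspose,
      kron_conjTranspose, Matrix.conjTranspose_conjTranspose]
    have h01 : (!![0,1;0,0] : Matrix (Fin 2) (Fin 2) ℂ)ᴴ = !![0,0;1,0] := by
      ext i j; fin_cases i <;> fin_cases j <;> simp [Matrix.conjTranspose_apply]
    have h10 : (!![0,0;1,0] : Matrix (Fin 2) (Fin 2) ℂ)ᴴ = !![0,1;0,0] := by
      ext i j; fin_cases i <;> fin_cases j <;> simp [Matrix.conjTranspose_apply]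
    have hhalf : star (1/2 : ℂ) = (1/2 : ℂ) := by
      rw [Complex.star_def, ← Complex.ofReal_one, ← Complex.ofReal_ofNat, ← Complex.ofReal_div,
        Complex.conj_ofReal]
    rw [h01, h10, hhalf, add_comm]
  -- the square
  have hsq : (pat W)ᴴ * pat W =
      (1/4 : ℂ) • ((W * Wᴴ) ⊗ₖ !![1,0;0,0] + (Wᴴ * W) ⊗ₖ !![0,0;0,1]) := by
    rw [hpatH, pat_eq, Matrix.smul_mul, Matrix.mul_smul, smul_smul]
    have hTT : (W ⊗ₖ !![0,1;0,0] + Wᴴ ⊗ₖ !![0,0;1,0]) *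
        (W ⊗ₖ !![0,1;0,0] + Wᴴ ⊗ₖ !![0,0;1,0]) =
        (W * Wᴴ) ⊗ₖ !![1,0;0,0] + (Wᴴ * W) ⊗ₖ !![0,0;0,1] := by
      rw [Matrix.add_mul, Matrix.mul_add, Matrix.mul_add, ← Matrix.mul_kronecker_mul,
        ← Matrix.mul_kronecker_mul, ← Matrix.mul_kronecker_mul, ← Matrix.mul_kronecker_mul,
        e0011, e1100, e0101, e1010, Matrix.kronecker_zero, Matrix.kronecker_zero]
      rw [zero_add, add_zero]
    rw [hTT]
    norm_num
  -- the square root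
  have hSpsd : ((1/2:ℂ) • (hBW.sqrt ⊗ₖ !![1,0;0,0] + hAW.sqrt ⊗ₖ !![0,0;0,1])).PosSemidef := by
    have hsum := (posSemidef_kron_diagproj hBW.posSemidef_sqrt _ h00H e0000).add
      (posSemidef_kron_diagproj hAW.posSemidef_sqrt _ h11H e1111)
    have h12 : ((1/2 : ℝ) : ℂ) = (1/2 : ℂ) := by norm_num
    rw [← h12]
    exact posSemidef_ofReal_smul (by norm_num) hsum
  have hS2 : ((1/2:ℂ) • (hBW.sqrt ⊗ₖ !![1,0;0,0] + hAW.sqrt ⊗ₖ !![0,0;0,1])) ^ 2 =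
      (pat W)ᴴ * pat W := by
    rw [hsq, pow_two, Matrix.smul_mul, Matrix.mul_smul, smul_smul]
    have hTT : (hBW.sqrt ⊗ₖ !![1,0;0,0] + hAW.sqrt ⊗ₖ !![0,0;0,1]) *
        (hBW.sqrt ⊗ₖ !![1,0;0,0] + hAW.sqrt ⊗ₖ !![0,0;0,1]) =
        (W * Wᴴ) ⊗ₖ !![1,0;0,0] + (Wᴴ * W) ⊗ₖ !![0,0;0,1] := by
      rw [Matrix.add_mul, Matrix.mul_add, Matrix.mul_add, ← Matrix.mul_kronecker_mul,
        ← Matrix.mul_kronecker_mul, ← Matrix.mul_kronecker_mul, ← Matrix.mul_kronecker_mul,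
        e0000, e1111, e0011b, e1100b, Matrix.kronecker_zero, Matrix.kronecker_zero,
        Matrix.PosSemidef.sqrt_mul_self, Matrix.PosSemidef.sqrt_mul_self]
      rw [zero_add, add_zero]
    rw [hTT]
    norm_num
  have hpat := Matrix.posSemidef_conjTranspose_mul_self (pat W)
  have hSsqrt : (1/2:ℂ) • (hBW.sqrt ⊗ₖ !![1,0;0,0] + hAW.sqrt ⊗ₖ !![0,0;0,1]) = hpat.sqrt :=
    hSpsd.eq_sqrt_of_sq_eq hpat hS2
  -- traces
  have hPtr : hBW.sqrt.trace.re = traceNorm W := by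
    have h1 : traceNorm Wᴴ = hBW.sqrt.trace.re := by
      rw [traceNorm, show Wᴴᴴ * Wᴴ = W * Wᴴ by rw [Matrix.conjTranspose_conjTranspose],
        sqrtM_eq hBW]
    rw [← h1, traceNorm_conjTranspose]
  have hQtr : hAW.sqrt.trace.re = traceNorm W := by
    rw [traceNorm, sqrtM_eq hAW]
  have htr00 : (!![1,0;0,0] : Matrix (Fin 2) (Fin 2) ℂ).trace = 1 := by
    rw [Matrix.trace_fin_two_of]; norm_num
  have htr11 : (!![0,0;0,1] : Matrix (Fin 2) (Fin 2) ℂ).trace = 1 := by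
    rw [Matrix.trace_fin_two_of]; norm_num
  rw [traceNorm, sqrtM_eq hpat, ← hSsqrt, Matrix.trace_smul, Matrix.trace_add,
    Matrix.trace_kronecker, Matrix.trace_kronecker, htr00, htr11, mul_one, mul_one]
  rw [smul_eq_mul, Complex.mul_re, Complex.add_re]
  have him : (1/2 : ℂ).im = 0 := by norm_num
  have hre : (1/2 : ℂ).re = 1/2 := by norm_num
  rw [him, hre, hPtr, hQtr]
  ring

end HermAux

/-- For Hermiticity-preserving Φ, if X of trace norm one achieves the norm of Φ ⊗ I, then
the Hermitian matrix Y = (1/2) X ⊗ |0⟩⟨1| + (1/2) X† ⊗ |1⟩⟨0| has trace norm one and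
achieves the same value. -/
theorem hermitian_trick_achieves_norm {n m : ℕ} {α : Type} [Fintype α] [DecidableEq α]
    (Φ : Matrix (Fin n) (Fin n) Complex →ₗ[Complex] Matrix (Fin m) (Fin m) Complex)
    (hherm : ∀ X : Matrix (Fin n) (Fin n) Complex, Φ Xᴴ = (Φ X)ᴴ)
    (X : Matrix (Fin n × α) (Fin n × α) Complex)
    (hX : traceNorm X = 1)
    (hmax : ∀ Z : Matrix (Fin n × α) (Fin n × α) Complex, traceNorm Z = 1 →
      traceNorm (extendId (⇑Φ) α Z) ≤ traceNorm (extendId (⇑Φ) α X))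
    (Y : Matrix (Fin n × (α × Fin 2)) (Fin n × (α × Fin 2)) Complex)
    (hY : Y = Matrix.of fun s t =>
      if s.2.2 = 0 ∧ t.2.2 = 1 then (1 / 2 : Complex) * X (s.1, s.2.1) (t.1, t.2.1)
      else if s.2.2 = 1 ∧ t.2.2 = 0 then (1 / 2 : Complex) * star (X (t.1, t.2.1) (s.1, s.2.1))
      else 0) :
    traceNorm Y = 1 ∧
      traceNorm (extendId (⇑Φ) (α × Fin 2) Y) = traceNorm (extendId (⇑Φ) α X) := by
  classical
  let e : (Fin n × (α × Fin 2)) ≃ ((Fin n × α) × Fin 2) :=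
    ⟨fun s => ((s.1, s.2.1), s.2.2), fun p => (p.1.1, (p.1.2, p.2)), fun s => rfl, fun p => rfl⟩
  let e' : (Fin m × (α × Fin 2)) ≃ ((Fin m × α) × Fin 2) :=
    ⟨fun s => ((s.1, s.2.1), s.2.2), fun p => (p.1.1, (p.1.2, p.2)), fun s => rfl, fun p => rfl⟩
  have hYsub : Y = (HermAux.pat X).submatrix e e := by
    rw [hY]
    ext s t
    rfl
  have h1 : traceNorm Y = 1 := by
    rw [hYsub, HermAux.traceNorm_submatrix, HermAux.traceNorm_pat, hX]
  have hExt : extendId (⇑Φ) (α × Fin 2) Y =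
      (HermAux.pat (extendId (⇑Φ) α X)).submatrix e' e' := by
    ext p q
    show Φ (Matrix.of fun a b => Y (a, p.2) (b, q.2)) p.1 q.1 =
      HermAux.pat (extendId (⇑Φ) α X) (e' p) (e' q)
    have hp : p.2.2 = 0 ∨ p.2.2 = 1 := by omega
    have hq : q.2.2 = 0 ∨ q.2.2 = 1 := by omega
    rcases hp with hp | hp <;> rcases hq with hq | hq
    · have hin : (Matrix.of fun a b => Y (a, p.2) (b, q.2)) =
          (0 : Matrix (Fin n) (Fin n) Complex) := by
        ext a b
        rw [hY]
        simp [hp, hq]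
      rw [hin, map_zero]
      simp [HermAux.pat, e', hp, hq]
    · have hin : (Matrix.of fun a b => Y (a, p.2) (b, q.2)) =
          (1/2 : ℂ) • (Matrix.of fun a b => X (a, p.2.1) (b, q.2.1)) := by
        ext a b
        rw [hY]
        simp [hp, hq]
      rw [hin, map_smul]
      simp only [HermAux.pat, e', Matrix.smul_apply, smul_eq_mul, Matrix.of_apply]
      rw [if_pos ⟨hp, hq⟩]
      rfl
    · have hin : (Matrix.of fun a b => Y (a, p.2) (b, q.2)) =
          (1/2 : ℂ) • (Matrix.of fun a b => X (a, q.2.1) (b, p.2.1))ᴴ := by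
        ext a b
        rw [hY]
        simp [hp, hq, Matrix.conjTranspose_apply]
      rw [hin, map_smul, hherm]
      simp only [HermAux.pat, e', Matrix.smul_apply, smul_eq_mul, Matrix.of_apply,
        Matrix.conjTranspose_apply]
      rw [if_neg (by simp [hp]), if_pos ⟨hp, hq⟩]
      rfl
    · have hin : (Matrix.of fun a b => Y (a, p.2) (b, q.2)) =
          (0 : Matrix (Fin n) (Fin n) Complex) := by
        ext a b
        rw [hY]
        simp [hp, hq]
      rw [hin, map_zero]
      simp [HermAux.pat, e', hp, hq]
  have h2 : traceNorm (extendId (⇑Φ) (α × Fin 2) Y) = traceNorm (extendId (⇑Φ) α X) := by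
    rw [hExt, HermAux.traceNorm_submatrix, HermAux.traceNorm_pat]
  exact ⟨h1, h2⟩
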